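/- Let M be the 3×3 Hankel matrix over K of characteristic ≠2, with entries M_{ij}=x_{i+j-1} in K[x_1,…,x_5]. Then α=x_1x_3x_5∉P_2(M) and (x_1,…,x_5)·α⊆P_2(M); hence (x_1,…,x_5) is an associated prime of P_2(M). -/

import Mathlib

open MvPolynomial

/-- The variable `x_i` (1-based) in `K[x_1, …, x_N]`. -/
noncomputable def xv (K : Type*) [CommRing K] (N : ℕ) (i : ℕ) : MvPolynomial (Fin N) K :=
  if h : 1 ≤ i ∧ i ≤ N then X (⟨i - 1, by omega⟩ : Fin N) else 0

/-- The ideal generated by the 2×2 subpermanents of the m×n Hankel matrix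
`M_{ij} = x_{i+j-1}` in `K[x_1, …, x_{m+n-1}]`. -/
noncomputable def P2 (K : Type*) [CommRing K] (m n : ℕ) :
    Ideal (MvPolynomial (Fin (m + n - 1)) K) :=
  Ideal.span { p : MvPolynomial (Fin (m + n - 1)) K | ∃ a b c d : ℕ,
    1 ≤ a ∧ a < b ∧ b ≤ m ∧ 1 ≤ c ∧ c < d ∧ d ≤ n ∧
    p = xv K (m + n - 1) (a + c - 1) * xv K (m + n - 1) (b + d - 1)
      + xv K (m + n - 1) (a + d - 1) * xv K (m + n - 1) (b + c - 1) }

namespace Stmt18Aux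

noncomputable section

open Finsupp

variable {K : Type*} [CommRing K]

def m135 : Fin 5 →₀ ℕ := single 0 1 + single 2 1 + single 4 1
def m144 : Fin 5 →₀ ℕ := single 0 1 + single 3 2
def m225 : Fin 5 →₀ ℕ := single 1 2 + single 4 1
def m234 : Fin 5 →₀ ℕ := single 1 1 + single 2 1 + single 3 1
def m333 : Fin 5 →₀ ℕ := single 2 3

/-- The key linear functional vanishing on `P2` but not on `α`. -/
def L (p : MvPolynomial (Fin 5) K) : K :=
  coeff m144 p + coeff m225 p + coeff m333 p - coeff m135 p - coeff m234 p

lemma L_add (p q : MvPolynomial (Fin 5) K) : L (p + q) = L p + L q := by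
  simp only [L, coeff_add]; ring

lemma Lg1 (r : MvPolynomial (Fin 5) K) : L (r * (X 0 * X 2 + X 1 * X 1)) = 0 := by
  simp only [L, mul_add, ← mul_assoc, coeff_add, coeff_mul_X', m135, m144, m225, m234, m333]
  simp [Finsupp.mem_support_iff, Finsupp.single_apply, Finsupp.add_apply]
  rw [sub_eq_zero]; congr 1; ext a; fin_cases a <;> simp

lemma Lg2 (r : MvPolynomial (Fin 5) K) : L (r * (X 0 * X 3 + X 1 * X 2)) = 0 := by
  simp only [L, mul_add, ← mul_assoc, coeff_add, coeff_mul_X', m135, m144, m225, m234, m333]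
  simp [Finsupp.mem_support_iff, Finsupp.single_apply, Finsupp.add_apply]
  rw [sub_eq_zero]; congr 1; ext a; fin_cases a <;> simp

lemma Lg2' (r : MvPolynomial (Fin 5) K) : L (r * (X 0 * X 3 + X 2 * X 1)) = 0 := by
  rw [mul_comm (X 2) (X 1)]; exact Lg2 r

lemma Lg3 (r : MvPolynomial (Fin 5) K) : L (r * (X 0 * X 4 + X 2 * X 2)) = 0 := by
  simp only [L, mul_add, ← mul_assoc, coeff_add, coeff_mul_X', m135, m144, m225, m234, m333]
  simp [Finsupp.mem_support_iff, Finsupp.single_apply, Finsupp.add_apply]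
  rw [sub_eq_zero]; congr 1; ext a; fin_cases a <;> simp

lemma Lg4 (r : MvPolynomial (Fin 5) K) : L (r * (X 1 * X 3 + X 2 * X 2)) = 0 := by
  simp only [L, mul_add, ← mul_assoc, coeff_add, coeff_mul_X', m135, m144, m225, m234, m333]
  simp [Finsupp.mem_support_iff, Finsupp.single_apply, Finsupp.add_apply]
  rw [sub_eq_zero]; congr 1; ext a; fin_cases a <;> simp

lemma Lg5 (r : MvPolynomial (Fin 5) K) : L (r * (X 1 * X 4 + X 2 * X 3)) = 0 := by
  simp only [L, mul_add, ← mul_assoc, coeff_add, coeff_mul_X', m135, m144, m225, m234, m333]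
  simp [Finsupp.mem_support_iff, Finsupp.single_apply, Finsupp.add_apply]
  rw [sub_eq_zero]; congr 1; ext a; fin_cases a <;> simp

lemma Lg5' (r : MvPolynomial (Fin 5) K) : L (r * (X 1 * X 4 + X 3 * X 2)) = 0 := by
  rw [mul_comm (X 3) (X 2)]; exact Lg5 r

lemma Lg6 (r : MvPolynomial (Fin 5) K) : L (r * (X 2 * X 4 + X 3 * X 3)) = 0 := by
  simp only [L, mul_add, ← mul_assoc, coeff_add, coeff_mul_X', m135, m144, m225, m234, m333]
  simp [Finsupp.mem_support_iff, Finsupp.single_apply, Finsupp.add_apply]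
  rw [sub_eq_zero]; congr 1; ext a; fin_cases a <;> simp

set_option maxHeartbeats 1000000 in
lemma L_vanish (p : MvPolynomial (Fin 5) K) (hp : p ∈ P2 K 3 3) : L p = 0 := by
  have main : ∀ r : MvPolynomial (Fin 5) K, L (r * p) = 0 := by
    refine Submodule.span_induction
      (p := fun q _ => ∀ r : MvPolynomial (Fin 5) K, L (r * q) = 0) ?_ ?_ ?_ ?_ hp
    · rintro q ⟨a, b, c, d, ha, hab, hb, hc, hcd, hd, rfl⟩ r
      have ha2 : a ≤ 2 := by omega
      have hc2 : c ≤ 2 := by omega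
      have hb3 : b ≤ 3 := hb
      have hd3 : d ≤ 3 := hd
      interval_cases a <;> interval_cases b <;> interval_cases c <;> interval_cases d <;>
        norm_num [xv] <;> simp only [Fin.reduceFinMk] <;>
        first
          | with_reducible exact Lg1 r | with_reducible exact Lg2 r
          | with_reducible exact Lg2' r | with_reducible exact Lg3 r
          | with_reducible exact Lg4 r | with_reducible exact Lg5 r
          | with_reducible exact Lg5' r | with_reducible exact Lg6 r
    · intro r; simp [L]
    · intro x y _ _ hx hy r
      rw [mul_add, L_add, hx, hy, add_zero]
    · intro a x _ hx r
      rw [smul_eq_mul, ← mul_assoc, hx]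
  simpa using main 1

lemma L_alpha : L (X 0 * X 2 * X 4 : MvPolynomial (Fin 5) K) = -1 := by
  have h : (X 0 * X 2 * X 4 : MvPolynomial (Fin 5) K) = monomial m135 1 := by
    simp [m135, X, monomial_mul]
  rw [L, h]
  rw [coeff_monomial, coeff_monomial, coeff_monomial, coeff_monomial, coeff_monomial]
  rw [if_neg, if_neg, if_neg, if_pos rfl, if_neg]
  · ring
  all_goals
    intro hh
    have h4 := DFunLike.congr_fun hh (4 : Fin 5)
    have h0 := DFunLike.congr_fun hh (0 : Fin 5)
    have h2 := DFunLike.congr_fun hh (2 : Fin 5)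
    simp [m135, m144, m225, m234, m333, Finsupp.add_apply, Finsupp.single_apply] at h4 h0 h2

lemma alpha_not_mem [Nontrivial K] :
    (X 0 * X 2 * X 4 : MvPolynomial (Fin 5) K) ∉ P2 K 3 3 := by
  intro h
  have := L_vanish _ h
  rw [L_alpha] at this
  exact one_ne_zero (neg_eq_zero.mp this)


section Gens

lemma hg1 : (X 0 * X 2 + X 1 * X 1 : MvPolynomial (Fin 5) K) ∈ P2 K 3 3 :=
  Ideal.subset_span ⟨1, 2, 1, 2, by norm_num, by norm_num, by norm_num, by norm_num,
    by norm_num, by norm_num, by norm_num [xv]; rfl⟩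

lemma hg2 : (X 0 * X 3 + X 1 * X 2 : MvPolynomial (Fin 5) K) ∈ P2 K 3 3 :=
  Ideal.subset_span ⟨1, 3, 1, 2, by norm_num, by norm_num, by norm_num, by norm_num,
    by norm_num, by norm_num, by norm_num [xv]; rfl⟩

lemma hg3 : (X 0 * X 4 + X 2 * X 2 : MvPolynomial (Fin 5) K) ∈ P2 K 3 3 :=
  Ideal.subset_span ⟨1, 3, 1, 3, by norm_num, by norm_num, by norm_num, by norm_num,
    by norm_num, by norm_num, by norm_num [xv]; rfl⟩

lemma hg4 : (X 1 * X 3 + X 2 * X 2 : MvPolynomial (Fin 5) K) ∈ P2 K 3 3 :=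
  Ideal.subset_span ⟨1, 2, 2, 3, by norm_num, by norm_num, by norm_num, by norm_num,
    by norm_num, by norm_num, by norm_num [xv]; rfl⟩

lemma hg5 : (X 1 * X 4 + X 2 * X 3 : MvPolynomial (Fin 5) K) ∈ P2 K 3 3 :=
  Ideal.subset_span ⟨1, 3, 2, 3, by norm_num, by norm_num, by norm_num, by norm_num,
    by norm_num, by norm_num, by norm_num [xv]; rfl⟩

lemma hg6 : (X 2 * X 4 + X 3 * X 3 : MvPolynomial (Fin 5) K) ∈ P2 K 3 3 :=
  Ideal.subset_span ⟨2, 3, 2, 3, by norm_num, by norm_num, by norm_num, by norm_num,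
    by norm_num, by norm_num, by norm_num [xv]; rfl⟩

end Gens

section FieldK

variable {K : Type*} [Field K]

lemma half_mem (h2 : (2 : K) ≠ 0) {p : MvPolynomial (Fin 5) K}
    (hp : 2 * p ∈ P2 K 3 3) : p ∈ P2 K 3 3 := by
  have h1 : (C ((2 : K)⁻¹) * 2 : MvPolynomial (Fin 5) K) = 1 := by
    rw [show ((2 : MvPolynomial (Fin 5) K)) = C (2 : K) from
      (map_ofNat (C : K →+* MvPolynomial (Fin 5) K) 2).symm, ← C_mul, inv_mul_cancel₀ h2, C_1]
  have : p = C ((2 : K)⁻¹) * (2 * p) := by rw [← mul_assoc, h1, one_mul]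
  rw [this]
  exact Ideal.mul_mem_left _ _ hp

lemma B1 (h2 : (2 : K) ≠ 0) : (X 0 * (X 0 * X 2 * X 4) : MvPolynomial (Fin 5) K) ∈ P2 K 3 3 := by
  apply half_mem h2
  have rep : (2 : MvPolynomial (Fin 5) K) * (X 0 * (X 0 * X 2 * X 4)) =
      (-(X 2 * X 2)) * (X 0 * X 2 + X 1 * X 1) + (X 1 * X 2) * (X 0 * X 3 + X 1 * X 2)
      + (2 * (X 0 * X 2)) * (X 0 * X 4 + X 2 * X 2)
      + (-(X 0 * X 2)) * (X 1 * X 3 + X 2 * X 2) := by ring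
  rw [rep]
  exact add_mem (add_mem (add_mem (Ideal.mul_mem_left _ _ hg1) (Ideal.mul_mem_left _ _ hg2))
    (Ideal.mul_mem_left _ _ hg3)) (Ideal.mul_mem_left _ _ hg4)

lemma B2 (h2 : (2 : K) ≠ 0) : (X 1 * (X 0 * X 2 * X 4) : MvPolynomial (Fin 5) K) ∈ P2 K 3 3 := by
  apply half_mem h2
  have rep : (2 : MvPolynomial (Fin 5) K) * (X 1 * (X 0 * X 2 * X 4)) =
      (X 2 * X 3) * (X 0 * X 2 + X 1 * X 1)
      + (2 * (X 0 * X 4) - X 1 * X 3) * (X 0 * X 3 + X 1 * X 2)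
      + (-(2 * (X 0 * X 3))) * (X 0 * X 4 + X 2 * X 2)
      + (X 0 * X 3) * (X 1 * X 3 + X 2 * X 2) := by ring
  rw [rep]
  exact add_mem (add_mem (add_mem (Ideal.mul_mem_left _ _ hg1) (Ideal.mul_mem_left _ _ hg2))
    (Ideal.mul_mem_left _ _ hg3)) (Ideal.mul_mem_left _ _ hg4)

lemma B3 (h2 : (2 : K) ≠ 0) : (X 2 * (X 0 * X 2 * X 4) : MvPolynomial (Fin 5) K) ∈ P2 K 3 3 := by
  apply half_mem h2
  have rep : (2 : MvPolynomial (Fin 5) K) * (X 2 * (X 0 * X 2 * X 4)) =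
      (X 2 * X 4) * (X 0 * X 2 + X 1 * X 1) + (-(X 1 * X 4)) * (X 0 * X 3 + X 1 * X 2)
      + (X 0 * X 4) * (X 1 * X 3 + X 2 * X 2) := by ring
  rw [rep]
  exact add_mem (add_mem (Ideal.mul_mem_left _ _ hg1) (Ideal.mul_mem_left _ _ hg2))
    (Ideal.mul_mem_left _ _ hg4)

lemma B4 (h2 : (2 : K) ≠ 0) : (X 3 * (X 0 * X 2 * X 4) : MvPolynomial (Fin 5) K) ∈ P2 K 3 3 := by
  apply half_mem h2
  have rep : (2 : MvPolynomial (Fin 5) K) * (X 3 * (X 0 * X 2 * X 4)) =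
      (X 3 * X 4) * (X 0 * X 2 + X 1 * X 1) + (X 2 * X 4) * (X 0 * X 3 + X 1 * X 2)
      + (-(X 1 * X 4)) * (X 1 * X 3 + X 2 * X 2) := by ring
  rw [rep]
  exact add_mem (add_mem (Ideal.mul_mem_left _ _ hg1) (Ideal.mul_mem_left _ _ hg2))
    (Ideal.mul_mem_left _ _ hg4)

lemma B5 (h2 : (2 : K) ≠ 0) : (X 4 * (X 0 * X 2 * X 4) : MvPolynomial (Fin 5) K) ∈ P2 K 3 3 := by
  apply half_mem h2
  have rep : (2 : MvPolynomial (Fin 5) K) * (X 4 * (X 0 * X 2 * X 4)) =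
      (X 3 * X 4) * (X 0 * X 3 + X 1 * X 2)
      + (2 * (X 2 * X 4) - X 3 * X 3) * (X 0 * X 4 + X 2 * X 2)
      + (-(2 * (X 2 * X 4))) * (X 1 * X 3 + X 2 * X 2)
      + (X 2 * X 3) * (X 1 * X 4 + X 2 * X 3) := by ring
  rw [rep]
  exact add_mem (add_mem (add_mem (Ideal.mul_mem_left _ _ hg2) (Ideal.mul_mem_left _ _ hg3))
    (Ideal.mul_mem_left _ _ hg4)) (Ideal.mul_mem_left _ _ hg5)

end FieldK

end

end Stmt18Aux

/-- For the 3×3 Hankel matrix, `α = x_1 x_3 x_5 ∉ P_2(M)`,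
`(x_1, …, x_5)·α ⊆ P_2(M)`, and hence `(x_1, …, x_5)` is an associated prime of
`P_2(M)`, namely `(P_2(M) : α) = (x_1, …, x_5)`. -/
theorem stmt18 {K : Type*} [Field K] (hK : ringChar K ≠ 2) :
    xv K (3 + 3 - 1) 1 * xv K (3 + 3 - 1) 3 * xv K (3 + 3 - 1) 5 ∉ P2 K 3 3 ∧
    (∀ k : ℕ, 1 ≤ k → k ≤ 5 →
      xv K (3 + 3 - 1) k *
        (xv K (3 + 3 - 1) 1 * xv K (3 + 3 - 1) 3 * xv K (3 + 3 - 1) 5) ∈ P2 K 3 3) ∧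
    Submodule.colon (P2 K 3 3)
        (Ideal.span {xv K (3 + 3 - 1) 1 * xv K (3 + 3 - 1) 3 * xv K (3 + 3 - 1) 5}) =
      Ideal.span { p : MvPolynomial (Fin (3 + 3 - 1)) K |
        ∃ k : ℕ, 1 ≤ k ∧ k ≤ 5 ∧ p = xv K (3 + 3 - 1) k } := by
  classical
  have h2K : (2 : K) ≠ 0 := Ring.two_ne_zero hK
  have e1 : xv K (3 + 3 - 1) 1 = (X 0 : MvPolynomial (Fin 5) K) := by norm_num [xv] <;> rfl
  have e2 : xv K (3 + 3 - 1) 2 = (X 1 : MvPolynomial (Fin 5) K) := by norm_num [xv] <;> rfl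
  have e3 : xv K (3 + 3 - 1) 3 = (X 2 : MvPolynomial (Fin 5) K) := by norm_num [xv] <;> rfl
  have e4 : xv K (3 + 3 - 1) 4 = (X 3 : MvPolynomial (Fin 5) K) := by norm_num [xv] <;> rfl
  have e5 : xv K (3 + 3 - 1) 5 = (X 4 : MvPolynomial (Fin 5) K) := by norm_num [xv] <;> rfl
  have hA : (X 0 * X 2 * X 4 : MvPolynomial (Fin 5) K) ∉ P2 K 3 3 :=
    Stmt18Aux.alpha_not_mem
  have hB : ∀ k : ℕ, 1 ≤ k → k ≤ 5 →
      xv K (3 + 3 - 1) k *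
        (xv K (3 + 3 - 1) 1 * xv K (3 + 3 - 1) 3 * xv K (3 + 3 - 1) 5) ∈ P2 K 3 3 := by
    intro k hk1 hk5
    rw [e1, e3, e5]
    interval_cases k
    · rw [e1]; exact Stmt18Aux.B1 h2K
    · rw [e2]; exact Stmt18Aux.B2 h2K
    · rw [e3]; exact Stmt18Aux.B3 h2K
    · rw [e4]; exact Stmt18Aux.B4 h2K
    · rw [e5]; exact Stmt18Aux.B5 h2K
  refine ⟨by rw [e1, e3, e5]; exact hA, hB, ?_⟩
  -- Part C
  have hset : { p : MvPolynomial (Fin (3 + 3 - 1)) K |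
        ∃ k : ℕ, 1 ≤ k ∧ k ≤ 5 ∧ p = xv K (3 + 3 - 1) k } =
      (X '' (Set.univ : Set (Fin 5)) : Set (MvPolynomial (Fin 5) K)) := by
    ext p
    constructor
    · rintro ⟨k, hk1, hk5, rfl⟩
      interval_cases k
      · exact ⟨0, Set.mem_univ _, e1.symm⟩
      · exact ⟨1, Set.mem_univ _, e2.symm⟩
      · exact ⟨2, Set.mem_univ _, e3.symm⟩
      · exact ⟨3, Set.mem_univ _, e4.symm⟩
      · exact ⟨4, Set.mem_univ _, e5.symm⟩
    · rintro ⟨i, -, rfl⟩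
      fin_cases i
      · exact ⟨1, by norm_num, by norm_num, e1⟩
      · exact ⟨2, by norm_num, by norm_num, e2⟩
      · exact ⟨3, by norm_num, by norm_num, e3⟩
      · exact ⟨4, by norm_num, by norm_num, e4⟩
      · exact ⟨5, by norm_num, by norm_num, e5⟩
  apply le_antisymm
  · -- colon ⊆ span of variables
    intro f hf
    have hfα : f * (X 0 * X 2 * X 4 : MvPolynomial (Fin 5) K) ∈ P2 K 3 3 := by
      rw [← Ideal.submodule_span_eq] at hf
      have := Submodule.mem_colon_span_singleton.mp hf
      rw [smul_eq_mul] at this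
      rw [e1, e3, e5] at this
      exact this
    set c : K := coeff 0 f with hc
    have hg : f - C c ∈ Ideal.span ((X '' (Set.univ : Set (Fin 5)) :
        Set (MvPolynomial (Fin 5) K))) := by
      rw [mem_ideal_span_X_image]
      intro m hm
      by_contra hcon
      push_neg at hcon
      have hm0 : m = 0 := by
        ext i
        simpa using hcon i (Set.mem_univ i)
      rw [mem_support_iff, hm0] at hm
      apply hm
      simp [coeff_sub, hc, coeff_zero_C]
    have hgα : (f - C c) * (X 0 * X 2 * X 4 : MvPolynomial (Fin 5) K) ∈ P2 K 3 3 := by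
      refine Submodule.span_induction
        (p := fun q _ => q * (X 0 * X 2 * X 4 : MvPolynomial (Fin 5) K) ∈ P2 K 3 3)
        ?_ ?_ ?_ ?_ hg
      · rintro q ⟨i, -, rfl⟩
        fin_cases i
        · exact Stmt18Aux.B1 h2K
        · exact Stmt18Aux.B2 h2K
        · exact Stmt18Aux.B3 h2K
        · exact Stmt18Aux.B4 h2K
        · exact Stmt18Aux.B5 h2K
      · simp
      · intro x y _ _ hx hy
        rw [add_mul]
        exact add_mem hx hy
      · intro a x _ hx
        rw [smul_eq_mul, mul_assoc]
        exact Ideal.mul_mem_left _ _ hx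
    have hCc : (C c : MvPolynomial (Fin 5) K) * (X 0 * X 2 * X 4) ∈ P2 K 3 3 := by
      have : (C c : MvPolynomial (Fin 5) K) * (X 0 * X 2 * X 4) =
          f * (X 0 * X 2 * X 4) - (f - C c) * (X 0 * X 2 * X 4) := by ring
      rw [this]
      exact sub_mem hfα hgα
    have hc0 : c = 0 := by
      by_contra hcne
      apply hA
      have : (X 0 * X 2 * X 4 : MvPolynomial (Fin 5) K) =
          C c⁻¹ * (C c * (X 0 * X 2 * X 4)) := by
        rw [← mul_assoc, ← C_mul, inv_mul_cancel₀ hcne, C_1, one_mul]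
      rw [this]
      exact Ideal.mul_mem_left _ _ hCc
    rw [hset]
    have : f = f - C c := by rw [hc0, C_0, sub_zero]
    rw [this]
    exact hg
  · -- span of variables ⊆ colon
    rw [Ideal.span_le]
    rintro p ⟨k, hk1, hk5, rfl⟩
    have : xv K (3 + 3 - 1) k *
        (xv K (3 + 3 - 1) 1 * xv K (3 + 3 - 1) 3 * xv K (3 + 3 - 1) 5) ∈ P2 K 3 3 :=
      hB k hk1 hk5
    refine SetLike.mem_coe.mpr ?_
    rw [← Ideal.submodule_span_eq]
    exact Submodule.mem_colon_span_singleton.mpr (by rw [smul_eq_mul]; exact this)
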